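/- Fix k₀ > 0 and let θ(k) = −(1/(4k₀²))·(k + k₀²/k) for k ∈ ℂ \ {0}. For every real u with 0 ≤ u ≤ 1/√2, the point k = k₀ + u·k₀·e^{−3πi/4} satisfies Re(i·θ(k)) = (√2·u/(8k₀))·(1/(u² − √2·u + 1) − 1), and moreover Re(i·θ(k)) ≥ u²/(4k₀). -/

import Mathlib

theorem re_i_theta_on_ray_l1 (k₀ u : ℝ) (hk₀ : 0 < k₀) (hu0 : 0 ≤ u)
    (hu : u ≤ 1 / Real.sqrt 2) (k : ℂ)
    (hk : k = (k₀ : ℂ) + (u : ℂ) * (k₀ : ℂ) * Complex.exp (-(3 * Real.pi / 4) * Complex.I)) :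
    (Complex.I * (-(1 / (4 * (k₀ : ℂ) ^ 2)) * (k + (k₀ : ℂ) ^ 2 / k))).re
        = Real.sqrt 2 * u / (8 * k₀) * (1 / (u ^ 2 - Real.sqrt 2 * u + 1) - 1) ∧
      u ^ 2 / (4 * k₀) ≤ (Complex.I * (-(1 / (4 * (k₀ : ℂ) ^ 2)) * (k + (k₀ : ℂ) ^ 2 / k))).re := by
  have hexp : Complex.exp (-(3 * Real.pi / 4) * Complex.I)
      = ((-(Real.sqrt 2 / 2) : ℝ) : ℂ) + ((-(Real.sqrt 2 / 2) : ℝ) : ℂ) * Complex.I := by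
    have h1 : (-(3 * (Real.pi:ℂ) / 4)) = ((-(3 * Real.pi / 4) : ℝ) : ℂ) := by push_cast; ring
    have h2 : 3 * Real.pi / 4 = Real.pi - Real.pi / 4 := by ring
    rw [h1, Complex.exp_mul_I, ← Complex.ofReal_cos, ← Complex.ofReal_sin,
      Real.cos_neg, Real.sin_neg, h2, Real.cos_pi_sub, Real.sin_pi_sub,
      Real.cos_pi_div_four, Real.sin_pi_div_four]
  set s : ℝ := u * Real.sqrt 2 / 2 with hs
  have h2 : Real.sqrt 2 ^ 2 = 2 := Real.sq_sqrt (by norm_num)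
  have h2p : (0:ℝ) < Real.sqrt 2 := by positivity
  have hs2 : u ^ 2 = 2 * s ^ 2 := by
    rw [hs]; field_simp; nlinarith [h2]
  have hsu : Real.sqrt 2 * u = 2 * s := by rw [hs]; ring
  have hs0 : 0 ≤ s := by positivity
  have hs12 : s ≤ 1 / 2 := by
    have h1 : u * Real.sqrt 2 ≤ (1 / Real.sqrt 2) * Real.sqrt 2 :=
      mul_le_mul_of_nonneg_right hu h2p.le
    have h3 : (1 / Real.sqrt 2) * Real.sqrt 2 = 1 := by field_simp
    rw [hs]; linarith
  have hre : k.re = k₀ * (1 - s) := by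
    rw [hk, hexp]; simp [hs]; ring
  have him : k.im = -(k₀ * s) := by
    rw [hk, hexp]; simp [hs]; ring
  have hD : 0 < 2 * s ^ 2 - 2 * s + 1 := by nlinarith [sq_nonneg (2*s - 1)]
  have hnorm : k.re * k.re + k.im * k.im = k₀ ^ 2 * (2 * s ^ 2 - 2 * s + 1) := by
    rw [hre, him]; ring
  have hEre : (Complex.I * (-(1 / (4 * (k₀ : ℂ) ^ 2)) * (k + (k₀ : ℂ) ^ 2 / k))).re
      = s / (4 * k₀) * (1 / (2 * s ^ 2 - 2 * s + 1) - 1) := by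
    rw [show ((k₀:ℂ)^2 / k) = ((k₀^2 : ℝ) : ℂ) * k⁻¹ by push_cast; ring,
      show -(1/(4*(k₀:ℂ)^2)) = ((-(1/(4*k₀^2)) : ℝ) : ℂ) by push_cast; ring]
    simp only [Complex.mul_re, Complex.mul_im, Complex.add_re, Complex.add_im,
      Complex.inv_re, Complex.inv_im, Complex.I_re, Complex.I_im,
      Complex.ofReal_re, Complex.ofReal_im, Complex.normSq_apply]
    rw [hnorm, hre, him]
    have hk0 : k₀ ≠ 0 := hk₀.ne'
    field_simp
    ring
  rw [hEre]
  constructor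
  · rw [hsu, hs2, show 2 * s ^ 2 - (2 * s) + 1 = 2 * s ^ 2 - 2 * s + 1 by ring]
    field_simp
    ring
  · rw [hs2, ← sub_nonneg]
    have heq : s / (4 * k₀) * (1 / (2 * s ^ 2 - 2 * s + 1) - 1) - 2 * s ^ 2 / (4 * k₀)
        = (2 * s ^ 3 * (1 - 2 * s)) / (4 * k₀ * (2 * s ^ 2 - 2 * s + 1)) := by
      field_simp [show s * 2 * (s - 1) + 1 ≠ 0 by nlinarith]
      ring
    rw [heq]
    apply div_nonneg
    · exact mul_nonneg (by positivity) (by linarith)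
    · positivity
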